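/- (Interpolation relations (23)) Let q ∈ L²(0,2π) be real-valued, h, H ∈ ℝ, and suppose μ_n ≥ 1/2 and ν_n ≥ 1/2 for all n ≥ 1. Let φ, ψ, Δ be as in the transformation-operator setting and 𝓚₀, 𝓚 ∈ L²(0,π) the kernels representing φ(π,ρ) and φ'(π,ρ), and set ω₋ := h + (1/2)∫₀^π q(x)dx. Then for every n ≥ 1: ψ'(π,μ_n) ≠ 0, ψ(π,ν_n) ≠ 0, ∫₀^π 𝓚₀(t)·sin μ_n t dt = −μ_n( cos μ_nπ + ω₋·(sin μ_nπ)/μ_n + Δ(μ_n)/ψ'(π,μ_n) ), and ∫₀^π 𝓚(t)·cos ν_n t dt = ν_n·sin ν_nπ − ω₋·cos ν_nπ + Δ(ν_n)/ψ(π,ν_n). -/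

import Mathlib

open MeasureTheory Set Filter
open scoped Real

noncomputable section

/-- A solution pair `(y, y')` of the Sturm–Liouville equation `-y'' + q y = λ y` on `[a, b]`,
understood in the integral-equation sense. -/
def IsSLSolution (q : ℝ → ℝ) (lam : ℂ) (a b : ℝ) (y y' : ℝ → ℂ) : Prop :=
  (∀ x ∈ Set.Icc a b, y x = y a + ∫ t in a..x, y' t) ∧
  (∀ x ∈ Set.Icc a b, y' x = y' a + ∫ t in a..x, ((q t : ℂ) - lam) * y t)

/-- The `L²(a,b)` norm of a real-valued function. -/
def L2normOn (f : ℝ → ℝ) (a b : ℝ) : ℝ := Real.sqrt (∫ x in a..b, (f x) ^ 2)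

/-- Membership in `L²(a,b)`. -/
def MemL2 (f : ℝ → ℝ) (a b : ℝ) : Prop :=
  MemLp f 2 (volume.restrict (Set.Ioo a b))

/-- The `ℓ²` norm of a complex sequence. -/
def l2seqNorm (c : ℕ → ℂ) : ℝ := Real.sqrt (∑' n, ‖c n‖ ^ 2)

/-- The `ℓ²` norm of a real sequence. -/
def l2seqNormR (c : ℕ → ℝ) : ℝ := Real.sqrt (∑' n, (c n) ^ 2)

/-- `lam` is an eigenvalue of `-y'' + q y = lam y` on `[0, 2π]` with boundary conditions
`y'(0) = h y(0)`, `y'(2π) = -H y(2π)`. -/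
def IsEigenvalueFull (q : ℝ → ℝ) (h H lam : ℝ) : Prop :=
  ∃ y y' : ℝ → ℂ, IsSLSolution q (lam : ℂ) 0 (2 * π) y y' ∧
    (∃ x ∈ Set.Icc (0:ℝ) (2 * π), y x ≠ 0) ∧
    y' 0 = (h : ℂ) * y 0 ∧ y' (2 * π) = -(H : ℂ) * y (2 * π)

/-- `lam` is an eigenvalue of `-y'' + q y = lam y` on `[π, 2π]` with boundary conditions
`y(π) = 0`, `y'(2π) = -H y(2π)`. -/
def IsEigenvalueDir (q : ℝ → ℝ) (H lam : ℝ) : Prop :=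
  ∃ y y' : ℝ → ℂ, IsSLSolution q (lam : ℂ) π (2 * π) y y' ∧
    (∃ x ∈ Set.Icc π (2 * π), y x ≠ 0) ∧
    y π = 0 ∧ y' (2 * π) = -(H : ℂ) * y (2 * π)

/-- `lam` is an eigenvalue of `-y'' + q y = lam y` on `[π, 2π]` with boundary conditions
`y'(π) = 0`, `y'(2π) = -H y(2π)`. -/
def IsEigenvalueNeu (q : ℝ → ℝ) (H lam : ℝ) : Prop :=
  ∃ y y' : ℝ → ℂ, IsSLSolution q (lam : ℂ) π (2 * π) y y' ∧
    (∃ x ∈ Set.Icc π (2 * π), y x ≠ 0) ∧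
    y' π = 0 ∧ y' (2 * π) = -(H : ℂ) * y (2 * π)

/-- The sequence `ρ` (indexed so that `ρ n` is the mathematical `ρ_{n+1}`) belongs to `B_Ω`
with parameters `ω` and `κ`: `ρ_n = (n-1)/2 + ω/(πn) + κ_n/n`, `{κ_n} ∈ ℓ²`,
and `|ω| + ‖{κ_n}‖_{ℓ²} ≤ Ω`. -/
def BOmegaMem (ρ : ℕ → ℝ) (ω : ℝ) (κ : ℕ → ℝ) (Ω : ℝ) : Prop :=
  (∀ n : ℕ, ρ n = (n : ℝ) / 2 + ω / (π * ((n : ℝ) + 1)) + κ n / ((n : ℝ) + 1)) ∧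
  Summable (fun n => (κ n) ^ 2) ∧ |ω| + l2seqNormR κ ≤ Ω

/-- The `n`-th factor (indexed so that `n : ℕ` is the mathematical index `n+1`) of the
Hadamard product `∏_{n≥1} (ρ_{n+1}² - z²)/((n/2)²)`. -/
def hadamardFactor (ρ : ℕ → ℝ) (z : ℂ) (k : ℕ) : ℂ :=
  (((ρ (k + 1) : ℝ) : ℂ) ^ 2 - z ^ 2) / (((((k : ℝ) + 1) / 2 : ℝ) : ℂ) ^ 2)

/-- The infinite product `Δ(z) = 2π(ρ₁² - z²)·∏_{n≥1} (ρ_{n+1}² - z²)/((n/2)²)`. -/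
def DeltaProd (ρ : ℕ → ℝ) (z : ℂ) : ℂ :=
  2 * (π : ℂ) * (((ρ 0 : ℝ) : ℂ) ^ 2 - z ^ 2) * ∏' k, hadamardFactor ρ z k



lemma core_bound {u u' k : ℝ → ℂ} {T d θ : ℝ} (hTd : T ≤ d)
    (hcu : ContinuousOn u (Icc T d)) (hcu' : ContinuousOn u' (Icc T d))
    (hk : IntervalIntegrable k volume T d)
    (heq1 : ∀ x ∈ Icc T d, u x = u T + ∫ t in T..x, u' t)
    (heq2 : ∀ x ∈ Icc T d, u' x = u' T + ∫ t in T..x, k t * u t)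
    (hθ : (d - T) + (∫ t in T..d, ‖k t‖) ≤ θ) (hθ1 : θ < 1) :
    ∀ x ∈ Icc T d, ‖u x‖ + ‖u' x‖ ≤ (‖u T‖ + ‖u' T‖) / (1 - θ) := by
  have hne : (Icc T d).Nonempty := nonempty_Icc.2 hTd
  have hf : ContinuousOn (fun t => ‖u t‖ + ‖u' t‖) (Icc T d) := hcu.norm.add hcu'.norm
  obtain ⟨z, hz, hmax⟩ := isCompact_Icc.exists_isMaxOn hne hf
  set M := ‖u z‖ + ‖u' z‖ with hMdef
  have hM0 : 0 ≤ M := by positivity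
  have hbd : ∀ t ∈ Icc T d, ‖u t‖ + ‖u' t‖ ≤ M := fun t ht => hmax ht
  set C := ‖u T‖ + ‖u' T‖ with hC
  have hsub : Set.uIcc T z ⊆ Set.uIcc T d := by
    rw [uIcc_of_le hz.1, uIcc_of_le hTd]; exact Icc_subset_Icc_right hz.2
  have hksub : IntervalIntegrable (fun t => ‖k t‖) volume T z := (hk.norm).mono_set hsub
  have h1 : ‖u z‖ ≤ ‖u T‖ + M * (d - T) := by
    rw [heq1 z hz]
    refine le_trans (norm_add_le _ _) (add_le_add le_rfl ?_)
    have := intervalIntegral.norm_integral_le_of_norm_le_const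
      (f := u') (C := M) (a := T) (b := z) (fun t ht => by
        rw [Set.uIoc_of_le hz.1] at ht
        have ht' : t ∈ Icc T d := ⟨le_of_lt ht.1, le_trans ht.2 hz.2⟩
        exact le_trans (le_add_of_nonneg_left (norm_nonneg _)) (hbd t ht'))
    refine le_trans this ?_
    rw [abs_of_nonneg (by linarith [hz.1, hz.2] : (0:ℝ) ≤ z - T)]
    exact mul_le_mul_of_nonneg_left (by linarith [hz.2]) hM0
  have h2 : ‖u' z‖ ≤ ‖u' T‖ + (∫ t in T..d, ‖k t‖) * M := by
    rw [heq2 z hz]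
    refine le_trans (norm_add_le _ _) (add_le_add le_rfl ?_)
    have hae : ∀ᵐ t ∂volume.restrict (Set.uIoc T z), ‖k t * u t‖ ≤ ‖k t‖ * M := by
      refine ae_restrict_of_forall_mem measurableSet_uIoc (fun t ht => ?_)
      rw [Set.uIoc_of_le hz.1] at ht
      have ht' : t ∈ Icc T d := ⟨le_of_lt ht.1, le_trans ht.2 hz.2⟩
      rw [norm_mul]
      exact mul_le_mul_of_nonneg_left
        (le_trans (le_add_of_nonneg_right (norm_nonneg _)) (hbd t ht')) (norm_nonneg _)
    have := intervalIntegral.norm_integral_le_abs_of_norm_le hae (hksub.mul_const M)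
    refine le_trans this ?_
    rw [intervalIntegral.integral_mul_const, abs_mul,
      abs_of_nonneg (intervalIntegral.integral_nonneg hz.1 (fun t _ => norm_nonneg _)),
      abs_of_nonneg hM0]
    refine mul_le_mul_of_nonneg_right ?_ hM0
    have hsplit := intervalIntegral.integral_add_adjacent_intervals hksub
      ((hk.norm).mono_set (by rw [uIcc_of_le hz.2, uIcc_of_le hTd]; exact Icc_subset_Icc_left hz.1))
    have h2nn : (0:ℝ) ≤ ∫ t in z..d, ‖k t‖ := intervalIntegral.integral_nonneg hz.2 (fun t _ => norm_nonneg _)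
    linarith [hsplit]
  have hintnn : (0:ℝ) ≤ ∫ t in T..d, ‖k t‖ := intervalIntegral.integral_nonneg hTd (fun t _ => norm_nonneg _)
  have key : M ≤ C + θ * M := by
    have hp : M * ((d - T) + ∫ t in T..d, ‖k t‖) ≤ M * θ := mul_le_mul_of_nonneg_left hθ hM0
    have expand : M * ((d - T) + ∫ t in T..d, ‖k t‖) = M * (d - T) + (∫ t in T..d, ‖k t‖) * M := by ring
    have hC' : C = ‖u T‖ + ‖u' T‖ := hC
    have hM' : M = ‖u z‖ + ‖u' z‖ := hMdef
    linarith [h1, h2, hp, expand]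
  intro x hx
  refine le_trans (hbd x hx) ?_
  rw [le_div_iff₀ (by linarith : (0:ℝ) < 1 - θ)]
  nlinarith [key]

lemma reanchor {f g : ℝ → ℂ} {a b : ℝ} (hab : a ≤ b)
    (hgi : IntervalIntegrable g volume a b)
    (heq : ∀ x ∈ Icc a b, f x = f a + ∫ t in a..x, g t) :
    ∀ T ∈ Icc a b, ∀ x ∈ Icc T b, f x = f T + ∫ t in T..x, g t := by
  intro T hT x hx
  have hx' : x ∈ Icc a b := ⟨le_trans hT.1 hx.1, hx.2⟩
  have m1 : IntervalIntegrable g volume a T :=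
    hgi.mono_set (by rw [uIcc_of_le hT.1, uIcc_of_le hab]; exact Icc_subset_Icc_right hT.2)
  have m2 : IntervalIntegrable g volume T x :=
    hgi.mono_set (by rw [uIcc_of_le hx.1, uIcc_of_le hab]; exact Icc_subset_Icc hT.1 hx.2)
  have hadd := intervalIntegral.integral_add_adjacent_intervals m1 m2
  rw [heq x hx', heq T hT, ← hadd]; ring

lemma small_step {k : ℝ → ℂ} {s b : ℝ} (hsb : s < b)
    (hk : IntervalIntegrable k volume s b) :
    ∃ d ∈ Ioc s b, (d - s) + (∫ t in s..d, ‖k t‖) ≤ (1:ℝ)/2 := by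
  have hkn : IntegrableOn (fun t => ‖k t‖) (uIcc s b) := by
    rw [uIcc_of_le hsb.le]
    rw [integrableOn_Icc_iff_integrableOn_Ioc]
    exact (intervalIntegrable_iff_integrableOn_Ioc_of_le hsb.le).1 hk.norm
  have hcont : ContinuousOn (fun x => (x - s) + ∫ t in s..x, ‖k t‖) (Icc s b) := by
    have := intervalIntegral.continuousOn_primitive_interval (a := s) (b := b) hkn
    rw [uIcc_of_le hsb.le] at this
    exact (continuousOn_id.sub continuousOn_const).add this
  have h0 : (fun x => (x - s) + ∫ t in s..x, ‖k t‖) s = 0 := by simp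
  have hcw : ContinuousWithinAt (fun x => (x - s) + ∫ t in s..x, ‖k t‖) (Icc s b) s :=
    hcont s ⟨le_rfl, hsb.le⟩
  have hlt : ∀ᶠ x in nhdsWithin s (Icc s b), (x - s) + (∫ t in s..x, ‖k t‖) < 1/2 := by
    have := hcw.eventually (p := fun y => y < (1:ℝ)/2) ?_
    · exact this
    · rw [h0]; exact Filter.Tendsto.eventually_lt_const (by norm_num) tendsto_id
  have hle : nhdsWithin s (Ioc s b) ≤ nhdsWithin s (Icc s b) := nhdsWithin_mono s Ioc_subset_Icc_self
  have hne : (nhdsWithin s (Ioc s b)).NeBot := by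
    rw [← mem_closure_iff_nhdsWithin_neBot, closure_Ioc hsb.ne]
    exact ⟨le_rfl, hsb.le⟩
  have := (hlt.filter_mono hle).and (eventually_mem_nhdsWithin (s := Ioc s b))
  obtain ⟨d, hd1, hd2⟩ := this.exists
  exact ⟨d, hd2, hd1.le⟩

lemma zero_of_anchor_left {u u' k : ℝ → ℂ} {a b : ℝ} (hab : a ≤ b)
    (hcu : ContinuousOn u (Icc a b)) (hcu' : ContinuousOn u' (Icc a b))
    (hk : IntervalIntegrable k volume a b)
    (hu'i : IntervalIntegrable u' volume a b)
    (hkui : IntervalIntegrable (fun t => k t * u t) volume a b)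
    (heq1 : ∀ x ∈ Icc a b, u x = u a + ∫ t in a..x, u' t)
    (heq2 : ∀ x ∈ Icc a b, u' x = u' a + ∫ t in a..x, k t * u t)
    (hua : u a = 0) (hu'a : u' a = 0) :
    ∀ x ∈ Icc a b, u x = 0 ∧ u' x = 0 := by
  have r1 := reanchor hab hu'i heq1
  have r2 := reanchor hab hkui heq2
  set Z := {x | x ∈ Icc a b ∧ u x = 0 ∧ u' x = 0} with hZ
  have hZclosed : IsClosed Z := by
    have h1 : IsClosed (Icc a b ∩ u ⁻¹' {0}) :=
      hcu.preimage_isClosed_of_isClosed isClosed_Icc isClosed_singleton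
    have h2 : IsClosed (Icc a b ∩ u' ⁻¹' {0}) :=
      hcu'.preimage_isClosed_of_isClosed isClosed_Icc isClosed_singleton
    have : Z = (Icc a b ∩ u ⁻¹' {0}) ∩ (Icc a b ∩ u' ⁻¹' {0}) := by
      ext x; simp [hZ]; tauto
    rw [this]; exact h1.inter h2
  set S := {x | x ∈ Icc a b ∧ ∀ t ∈ Icc a x, t ∈ Z} with hS
  have haS : a ∈ S := by
    refine ⟨⟨le_rfl, hab⟩, fun t ht => ?_⟩
    have : t = a := le_antisymm ht.2 ht.1
    exact ⟨by rw [this]; exact ⟨le_rfl, hab⟩, by rw [this]; exact ⟨hua, hu'a⟩⟩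
  have hSne : S.Nonempty := ⟨a, haS⟩
  have hSbdd : BddAbove S := ⟨b, fun x hx => hx.1.2⟩
  have hSsubZ : S ⊆ Z := fun x hx => hx.2 x ⟨hx.1.1, le_rfl⟩
  set s := sSup S with hs
  have hsab : s ∈ Icc a b := ⟨le_csSup hSbdd haS, csSup_le hSne (fun x hx => hx.1.2)⟩
  have hsZ : s ∈ Z := by
    have h1 : s ∈ closure S := csSup_mem_closure hSne hSbdd
    exact hZclosed.closure_subset (closure_mono hSsubZ h1)
  have hsS : s ∈ S := by
    refine ⟨hsab, fun t ht => ?_⟩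
    rcases eq_or_lt_of_le ht.2 with h | h
    · rwa [h]
    · obtain ⟨x, hxS, hx⟩ := exists_lt_of_lt_csSup hSne h
      exact hxS.2 t ⟨ht.1, hx.le⟩
  have hsb : s = b := by
    by_contra hne
    have hslt : s < b := lt_of_le_of_ne hsab.2 hne
    obtain ⟨d, hd, hdθ⟩ := small_step hslt
      (hk.mono_set (by rw [uIcc_of_le hslt.le, uIcc_of_le hab]; exact Icc_subset_Icc_left hsab.1))
    have hsd : s ≤ d := hd.1.le
    have hIccsub : Icc s d ⊆ Icc a b := Icc_subset_Icc hsab.1 hd.2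
    have hzero := core_bound hsd (hcu.mono hIccsub) (hcu'.mono hIccsub)
      (hk.mono_set (by rw [uIcc_of_le hsd, uIcc_of_le hab]; exact Icc_subset_Icc hsab.1 hd.2))
      (fun x hx => r1 s hsab x ⟨hx.1, le_trans hx.2 hd.2⟩)
      (fun x hx => r2 s hsab x ⟨hx.1, le_trans hx.2 hd.2⟩)
      hdθ (by norm_num)
    have hzz : ∀ x ∈ Icc s d, u x = 0 ∧ u' x = 0 := by
      intro x hx
      have := hzero x hx
      rw [hsZ.2.1, hsZ.2.2] at this
      simp only [norm_zero, add_zero, zero_div] at this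
      constructor <;> rw [← norm_eq_zero] <;>
        nlinarith [norm_nonneg (u x), norm_nonneg (u' x)]
    have hdS : d ∈ S := by
      refine ⟨⟨le_trans hsab.1 hsd, hd.2⟩, fun t ht => ?_⟩
      rcases le_or_gt t s with h | h
      · exact hsS.2 t ⟨ht.1, h⟩
      · exact ⟨⟨ht.1, le_trans ht.2 hd.2⟩, hzz t ⟨h.le, ht.2⟩⟩
    exact absurd (le_csSup hSbdd hdS) (not_le.2 hd.1)
  intro x hx
  exact (hsS.2 x (by rw [hsb] at *; exact hx)).2

lemma zero_of_anchor_right {u u' k : ℝ → ℂ} {a b : ℝ} (hab : a ≤ b)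
    (hcu : ContinuousOn u (Icc a b)) (hcu' : ContinuousOn u' (Icc a b))
    (hk : IntervalIntegrable k volume a b)
    (hu'i : IntervalIntegrable u' volume a b)
    (hkui : IntervalIntegrable (fun t => k t * u t) volume a b)
    (heq1 : ∀ x ∈ Icc a b, u x = u a + ∫ t in a..x, u' t)
    (heq2 : ∀ x ∈ Icc a b, u' x = u' a + ∫ t in a..x, k t * u t)
    (hub : u b = 0) (hu'b : u' b = 0) :
    ∀ x ∈ Icc a b, u x = 0 ∧ u' x = 0 := by
  have r1 := reanchor hab hu'i heq1
  have r2 := reanchor hab hkui heq2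
  have hmaps : ∀ x ∈ Icc a b, a + b - x ∈ Icc a b :=
    fun x hx => ⟨by linarith [hx.2], by linarith [hx.1]⟩
  have hcm : ContinuousOn (fun x : ℝ => a + b - x) (Icc a b) :=
    (continuous_const.sub continuous_id).continuousOn
  have hba : a + b - a = b := by ring
  have hsymm : ∀ {f : ℝ → ℂ}, IntervalIntegrable f volume a b →
      IntervalIntegrable (fun x => f (a + b - x)) volume a b := by
    intro f hf
    have := hf.comp_sub_left (a + b)
    simpa [hba, show a + b - b = a from by ring] using this.symm
  have he1 : ∀ x ∈ Icc a b, u (a + b - x) = u (a + b - a) + ∫ t in a..x, -u' (a + b - t) := by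
    intro x hx
    have hσ := hmaps x hx
    have key := r1 (a + b - x) hσ b ⟨hσ.2, le_rfl⟩
    rw [intervalIntegral.integral_neg,
      intervalIntegral.integral_comp_sub_left u' (a + b), hba]
    linear_combination -key
  have he2 : ∀ x ∈ Icc a b, -u' (a + b - x) = -u' (a + b - a) +
      ∫ t in a..x, k (a + b - t) * u (a + b - t) := by
    intro x hx
    have hσ := hmaps x hx
    have key := r2 (a + b - x) hσ b ⟨hσ.2, le_rfl⟩
    have heqi : (∫ t in a..x, k (a + b - t) * u (a + b - t)) =
        ∫ s in (a + b - x)..b, k s * u s := by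
      have := intervalIntegral.integral_comp_sub_left (fun s => k s * u s) (a + b) (a := a) (b := x)
      rw [hba] at this
      exact this
    rw [heqi, hba]
    linear_combination key
  have hz1 : u (a + b - a) = 0 := by rw [hba]; exact hub
  have hz2 : -u' (a + b - a) = 0 := by rw [hba, hu'b, neg_zero]
  have hL := zero_of_anchor_left (u := fun x => u (a + b - x))
    (u' := fun x => -u' (a + b - x)) (k := fun x => k (a + b - x)) hab
    (hcu.comp hcm (fun x hx => hmaps x hx))
    ((hcu'.comp hcm (fun x hx => hmaps x hx)).neg)
    (hsymm hk) ((hsymm hu'i).neg) (hsymm (f := fun t => k t * u t) hkui) he1 he2 hz1 hz2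
  intro x hx
  have := hL (a + b - x) (hmaps x hx)
  simp only [show a + b - (a + b - x) = x from by ring, neg_eq_zero] at this
  exact this

lemma sl_regularity {q : ℝ → ℝ} {lam : ℂ} {a b : ℝ} {y y' : ℝ → ℂ} (hab : a ≤ b)
    (hk : IntervalIntegrable (fun t => (q t : ℂ) - lam) volume a b)
    (hsol : IsSLSolution q lam a b y y') :
    ContinuousOn y (Icc a b) ∧ ContinuousOn y' (Icc a b) ∧
      IntervalIntegrable y' volume a b ∧
      IntervalIntegrable (fun t => ((q t : ℂ) - lam) * y t) volume a b := by
  obtain ⟨heq1, heq2⟩ := hsol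
  set k : ℝ → ℂ := fun t => (q t : ℂ) - lam with hkdef
  -- Step A: if y is bounded and a.e.s.m. on (a,b], everything follows
  have claimC : (∃ M, ∀ x ∈ Icc a b, ‖y x‖ ≤ M) →
      AEStronglyMeasurable y (volume.restrict (Ioc a b)) →
      ContinuousOn y (Icc a b) ∧ ContinuousOn y' (Icc a b) ∧
        IntervalIntegrable y' volume a b ∧
        IntervalIntegrable (fun t => k t * y t) volume a b := by
    rintro ⟨M, hM⟩ hmeas
    have hk1 : IntegrableOn k (Ioc a b) volume :=
      (intervalIntegrable_iff_integrableOn_Ioc_of_le hab).1 hk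
    have hkyi : IntervalIntegrable (fun t => k t * y t) volume a b := by
      rw [intervalIntegrable_iff_integrableOn_Ioc_of_le hab]
      refine Integrable.mono' (hk1.norm.mul_const (max M 0))
        (hk1.aestronglyMeasurable.mul hmeas) ?_
      refine (ae_restrict_iff' measurableSet_Ioc).2 (Filter.Eventually.of_forall fun t ht => ?_)
      rw [norm_mul]
      exact mul_le_mul_of_nonneg_left
        (le_trans (hM t ⟨ht.1.le, ht.2⟩) (le_max_left _ _)) (norm_nonneg _)
    have hy'c : ContinuousOn y' (Icc a b) := by
      have hI : IntegrableOn (fun t => k t * y t) (uIcc a b) volume := by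
        rw [uIcc_of_le hab, integrableOn_Icc_iff_integrableOn_Ioc]
        exact (intervalIntegrable_iff_integrableOn_Ioc_of_le hab).1 hkyi
      have hprim := intervalIntegral.continuousOn_primitive_interval (a := a) hI
      rw [uIcc_of_le hab] at hprim
      exact (continuousOn_const.add hprim).congr (fun x hx => heq2 x hx)
    have hy'i : IntervalIntegrable y' volume a b :=
      (hy'c.mono (by rw [uIcc_of_le hab] : uIcc a b ⊆ Icc a b)).intervalIntegrable
    have hyc : ContinuousOn y (Icc a b) := by
      have hI : IntegrableOn y' (uIcc a b) volume := by
        rw [uIcc_of_le hab, integrableOn_Icc_iff_integrableOn_Ioc]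
        exact (intervalIntegrable_iff_integrableOn_Ioc_of_le hab).1 hy'i
      have hprim := intervalIntegral.continuousOn_primitive_interval (a := a) hI
      rw [uIcc_of_le hab] at hprim
      exact (continuousOn_const.add hprim).congr (fun x hx => heq1 x hx)
    exact ⟨hyc, hy'c, hy'i, hkyi⟩
  -- the integrability region
  set I := {x | x ∈ Icc a b ∧ IntervalIntegrable y' volume a x} with hI
  have haI : a ∈ I := ⟨⟨le_rfl, hab⟩, by constructor <;> simp⟩
  have hIdown : ∀ x ∈ I, ∀ x', a ≤ x' → x' ≤ x → x' ∈ I := by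
    intro x hx x' h1 h2
    refine ⟨⟨h1, le_trans h2 hx.1.2⟩, hx.2.mono_set ?_⟩
    rw [uIcc_of_le h1, uIcc_of_le (le_trans h1 h2)]
    exact Icc_subset_Icc_right h2
  have hcontI : ∀ x ∈ I, ContinuousOn y (Icc a x) := by
    intro x hx
    have hIx : IntegrableOn y' (uIcc a x) volume := by
      rw [uIcc_of_le (le_trans haI.1.1 hx.1.1), integrableOn_Icc_iff_integrableOn_Ioc]
      exact (intervalIntegrable_iff_integrableOn_Ioc_of_le hx.1.1).1 hx.2
    have hprim := intervalIntegral.continuousOn_primitive_interval (a := a) hIx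
    rw [uIcc_of_le hx.1.1] at hprim
    exact (continuousOn_const.add hprim).congr
      (fun t ht => heq1 t ⟨ht.1, le_trans ht.2 hx.1.2⟩)
  have hyout : ∀ x ∈ Icc a b, x ∉ I → y x = y a := by
    intro x hx hnx
    have hni : ¬ IntervalIntegrable y' volume a x := fun hcon => hnx ⟨hx, hcon⟩
    rw [heq1 x hx, intervalIntegral.integral_undef hni, add_zero]
  have hIne : I.Nonempty := ⟨a, haI⟩
  have hIbdd : BddAbove I := ⟨b, fun x hx => hx.1.2⟩
  set c := sSup I with hc
  have hcab : c ∈ Icc a b := ⟨le_csSup hIbdd haI, csSup_le hIne fun x hx => hx.1.2⟩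
  by_cases hcI : c ∈ I
  · -- bounded + measurable
    have hyc : ContinuousOn y (Icc a c) := hcontI c hcI
    obtain ⟨B, hB⟩ := isCompact_Icc.exists_bound_of_continuousOn hyc
    have hBa : ‖y a‖ ≤ B := hB a ⟨le_rfl, hcab.1⟩
    have hbound : ∀ x ∈ Icc a b, ‖y x‖ ≤ B := by
      intro x hx
      by_cases hxc : x ≤ c
      · exact hB x ⟨hx.1, hxc⟩
      · rw [hyout x hx (fun hxI => hxc (le_csSup hIbdd hxI))]; exact hBa
    have hmeas : AEStronglyMeasurable y (volume.restrict (Ioc a b)) := by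
      rw [← Ioc_union_Ioc_eq_Ioc hcab.1 hcab.2, aestronglyMeasurable_union_iff]
      constructor
      · exact (hyc.aestronglyMeasurable measurableSet_Icc).mono_measure
          (Measure.restrict_mono Ioc_subset_Icc_self le_rfl)
      · refine (aestronglyMeasurable_const (b := y a)).congr ?_
        refine (ae_restrict_iff' measurableSet_Ioc).2 (Filter.Eventually.of_forall fun t ht => ?_)
        exact (hyout t ⟨le_trans hcab.1 ht.1.le, ht.2⟩
          (fun hI' => absurd (le_csSup hIbdd hI') (not_le.2 ht.1))).symm
    exact claimC ⟨B, hbound⟩ hmeas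
  · exfalso
    have hac : a < c := lt_of_le_of_ne hcab.1 (fun h => hcI (h ▸ haI))
    have hIco : ∀ x ∈ Ico a c, x ∈ I := by
      intro x hx
      obtain ⟨z, hzI, hz⟩ := exists_lt_of_lt_csSup hIne hx.2
      exact hIdown z hzI x hx.1 hz.le
    have hyx : ∀ x ∈ Ico a c, ContinuousOn y (Icc a x) := fun x hx => hcontI x (hIco x hx)
    have hky : ∀ x ∈ Ico a c, IntervalIntegrable (fun t => k t * y t) volume a x := by
      intro x hx
      refine (hk.mono_set ?_).mul_continuousOn ?_
      · rw [uIcc_of_le hx.1, uIcc_of_le hab]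
        exact Icc_subset_Icc_right (le_trans hx.2.le hcab.2)
      · rw [uIcc_of_le hx.1]; exact hyx x hx
    have hy'x : ∀ x ∈ Ico a c, ContinuousOn y' (Icc a x) := by
      intro x hx
      have hIx : IntegrableOn (fun t => k t * y t) (uIcc a x) volume := by
        rw [uIcc_of_le hx.1, integrableOn_Icc_iff_integrableOn_Ioc]
        exact (intervalIntegrable_iff_integrableOn_Ioc_of_le hx.1).1 (hky x hx)
      have hprim := intervalIntegral.continuousOn_primitive_interval (a := a) hIx
      rw [uIcc_of_le hx.1] at hprim
      exact (continuousOn_const.add hprim).congr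
        (fun t ht => heq2 t ⟨ht.1, le_trans ht.2 (le_trans hx.2.le hcab.2)⟩)
    -- choose T close to c
    have hknc : IntervalIntegrable (fun t => ‖k t‖) volume a c :=
      (hk.norm).mono_set (by rw [uIcc_of_le hcab.1, uIcc_of_le hab]; exact Icc_subset_Icc_right hcab.2)
    have hprimk : ContinuousOn (fun x => ∫ t in a..x, ‖k t‖) (Icc a c) := by
      have hIx : IntegrableOn (fun t => ‖k t‖) (uIcc a c) volume := by
        rw [uIcc_of_le hcab.1, integrableOn_Icc_iff_integrableOn_Ioc]
        exact (intervalIntegrable_iff_integrableOn_Ioc_of_le hcab.1).1 hknc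
      have hprim := intervalIntegral.continuousOn_primitive_interval (a := a) hIx
      rwa [uIcc_of_le hcab.1] at hprim
    set G := fun x => (c - x) + ((∫ t in a..c, ‖k t‖) - ∫ t in a..x, ‖k t‖) with hG
    have hGcont : ContinuousOn G (Icc a c) :=
      ((continuousOn_const.sub continuousOn_id).add (continuousOn_const.sub hprimk))
    have hGc : G c = 0 := by simp [hG]
    have hTex : ∃ T ∈ Ico a c, G T < 1/2 := by
      have hcw : ContinuousWithinAt G (Icc a c) c := hGcont c ⟨hac.le, le_rfl⟩
      have hlt : ∀ᶠ x in nhdsWithin c (Icc a c), G x < 1/2 := by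
        refine hcw.eventually (p := fun v => v < (1:ℝ)/2) ?_
        rw [hGc]
        exact Filter.Tendsto.eventually_lt_const (by norm_num) tendsto_id
      have hle : nhdsWithin c (Ico a c) ≤ nhdsWithin c (Icc a c) :=
        nhdsWithin_mono c Ico_subset_Icc_self
      have hne : (nhdsWithin c (Ico a c)).NeBot := by
        rw [← mem_closure_iff_nhdsWithin_neBot, closure_Ico hac.ne]
        exact ⟨hac.le, le_rfl⟩
      obtain ⟨T, hT1, hT2⟩ := ((hlt.filter_mono hle).and
        (eventually_mem_nhdsWithin (s := Ico a c))).exists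
      exact ⟨T, hT2, hT1⟩
    obtain ⟨T, hT, hGT⟩ := hTex
    set CC := ‖y T‖ + ‖y' T‖ with hCC
    have hsplitk : ∀ x ∈ Icc a c, (∫ t in T..x, ‖k t‖) = (∫ t in a..x, ‖k t‖) - ∫ t in a..T, ‖k t‖ := by
      intro x hx
      have m1 : IntervalIntegrable (fun t => ‖k t‖) volume a T :=
        hknc.mono_set (by rw [uIcc_of_le hT.1, uIcc_of_le hcab.1]; exact Icc_subset_Icc_right hT.2.le)
      have m2 : IntervalIntegrable (fun t => ‖k t‖) volume T x := by
        refine hknc.mono_set ?_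
        rcases le_total T x with h | h
        · rw [uIcc_of_le h, uIcc_of_le hcab.1]; exact Icc_subset_Icc hT.1 hx.2
        · rw [uIcc_comm, uIcc_of_le h, uIcc_of_le hcab.1]; exact Icc_subset_Icc hx.1 hT.2.le
      have := intervalIntegral.integral_add_adjacent_intervals m1 m2
      linarith [this]
    have hbd : ∀ x ∈ Ico T c, ‖y x‖ + ‖y' x‖ ≤ CC / (1 - 1/2) := by
      intro x hx
      have hxm : x ∈ Ico a c := ⟨le_trans hT.1 hx.1, hx.2⟩
      have hxb : x ≤ b := le_trans hx.2.le hcab.2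
      have hxI : x ∈ I := hIco x hxm
      have hre1 := reanchor hxm.1 hxI.2
        (fun t ht => heq1 t ⟨ht.1, le_trans ht.2 hxb⟩) T ⟨hT.1, hx.1⟩
      have hre2 := reanchor hxm.1 (hky x hxm)
        (fun t ht => heq2 t ⟨ht.1, le_trans ht.2 hxb⟩) T ⟨hT.1, hx.1⟩
      have hθx : (x - T) + (∫ t in T..x, ‖k t‖) ≤ 1/2 := by
        have e1 := hsplitk x ⟨hxm.1, hx.2.le⟩
        have e1c := hsplitk c ⟨hcab.1, le_rfl⟩
        have e2 : (∫ t in a..x, ‖k t‖) ≤ ∫ t in a..c, ‖k t‖ := by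
          have m1 : IntervalIntegrable (fun t => ‖k t‖) volume a x := hknc.mono_set
            (by rw [uIcc_of_le hxm.1, uIcc_of_le hcab.1]; exact Icc_subset_Icc_right hx.2.le)
          have m2 : IntervalIntegrable (fun t => ‖k t‖) volume x c := hknc.mono_set
            (by rw [uIcc_of_le hx.2.le, uIcc_of_le hcab.1]; exact Icc_subset_Icc hxm.1 le_rfl)
          have hadd := intervalIntegral.integral_add_adjacent_intervals m1 m2
          have hnn : (0:ℝ) ≤ ∫ t in x..c, ‖k t‖ :=
            intervalIntegral.integral_nonneg hx.2.le (fun t _ => norm_nonneg _)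
          linarith
        have hGT' : G T < 1/2 := hGT
        rw [hG] at hGT'
        simp only at hGT'
        linarith [e1, e2, hx.2.le]
      have hsub2 : uIcc T x ⊆ uIcc a b := by
        rw [uIcc_of_le hx.1, uIcc_of_le hab]
        exact Icc_subset_Icc hT.1 hxb
      have hcore := core_bound hx.1 ((hyx x hxm).mono (Icc_subset_Icc_left hT.1))
        ((hy'x x hxm).mono (Icc_subset_Icc_left hT.1))
        (hk.mono_set hsub2)
        hre1 hre2 hθx (by norm_num) x ⟨hx.1, le_rfl⟩
      exact hcore
    have hcy' : ContinuousOn y' (Ico a c) := by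
      intro z hz
      have hzc : z < c := hz.2
      set x := (z + c)/2 with hxdef
      have hzx : z < x := by rw [hxdef]; linarith
      have hxc : x < c := by rw [hxdef]; linarith
      have hxm : x ∈ Ico a c := ⟨le_trans hz.1 hzx.le, hxc⟩
      have hcwa := (hy'x x hxm) z ⟨hz.1, hzx.le⟩
      have hsub : Ico a c ∩ Iio x ⊆ Icc a x := fun w hw => ⟨hw.1.1, hw.2.le⟩
      exact (continuousWithinAt_inter (Iio_mem_nhds hzx)).1 (hcwa.mono hsub)
    have hfin : IntegrableOn y' (Ioc a c) volume := by
      rw [← Ioc_union_Ioc_eq_Ioc hT.1 hT.2.le]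
      refine IntegrableOn.union ?_ ?_
      · exact (intervalIntegrable_iff_integrableOn_Ioc_of_le hT.1).1 (hIco T hT).2
      · have hrc : volume.restrict (Ioc T c) = volume.restrict (Ioo T c) :=
          (Measure.restrict_congr_set Ioo_ae_eq_Ioc).symm
        rw [IntegrableOn, hrc]
        refine Integrable.mono' (g := fun _ => CC / (1 - 1/2)) ?_ ?_ ?_
        · exact integrableOn_const (by rw [Real.volume_Ioo]; exact ENNReal.ofReal_ne_top)
        · exact (hcy'.mono (fun w hw => ⟨le_trans hT.1 (le_of_lt hw.1), hw.2⟩)).aestronglyMeasurable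
            measurableSet_Ioo
        · refine (ae_restrict_iff' measurableSet_Ioo).2 (Filter.Eventually.of_forall fun t ht => ?_)
          have := hbd t ⟨ht.1.le, ht.2⟩
          linarith [norm_nonneg (y t)]
    exact hcI ⟨hcab, (intervalIntegrable_iff_integrableOn_Ioc_of_le hcab.1).2 hfin⟩

lemma key_prop {q : ℝ → ℝ} {H : ℝ} {lam : ℂ} {ψ ψ' y y' : ℝ → ℂ}
    (hqi : IntervalIntegrable (fun t => (q t : ℂ) - lam) volume π (2*π))
    (hψsol : IsSLSolution q lam π (2*π) ψ ψ') (hψb : ψ (2*π) = 1)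
    (hψ'b : ψ' (2*π) = -(H:ℂ))
    (hysol : IsSLSolution q lam π (2*π) y y')
    (hnt : ∃ x ∈ Icc π (2*π), y x ≠ 0)
    (hybc : y' (2*π) = -(H:ℂ) * y (2*π)) :
    y (2*π) ≠ 0 ∧ (∀ x ∈ Icc π (2*π), y x = y (2*π) * ψ x ∧ y' x = y (2*π) * ψ' x) ∧
      ¬(ψ π = 0 ∧ ψ' π = 0) := by
  have hπ := Real.pi_pos
  have hab : (π:ℝ) ≤ 2*π := by linarith
  obtain ⟨hψc, hψ'c, hψ'i, hkψi⟩ := sl_regularity hab hqi hψsol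
  obtain ⟨hyc, hy'c, hy'i, hkyi⟩ := sl_regularity hab hqi hysol
  have hnotboth : ¬(ψ π = 0 ∧ ψ' π = 0) := by
    rintro ⟨h1, h2⟩
    have := (zero_of_anchor_left hab hψc hψ'c hqi hψ'i hkψi hψsol.1 hψsol.2 h1 h2)
      (2*π) ⟨hab, le_rfl⟩
    rw [this.1] at hψb
    exact one_ne_zero hψb.symm
  have hy2 : y (2*π) ≠ 0 := by
    intro h0
    have h0' : y' (2*π) = 0 := by rw [hybc, h0, mul_zero]
    obtain ⟨x, hx, hxne⟩ := hnt
    exact hxne ((zero_of_anchor_right hab hyc hy'c hqi hy'i hkyi hysol.1 hysol.2 h0 h0') x hx).1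
  refine ⟨hy2, ?_, hnotboth⟩
  set κ := y (2*π) with hκ
  set u : ℝ → ℂ := fun x => y x - κ * ψ x with hu
  set u' : ℝ → ℂ := fun x => y' x - κ * ψ' x with hu'
  have hcu : ContinuousOn u (Icc π (2*π)) := hyc.sub (continuousOn_const.mul hψc)
  have hcu' : ContinuousOn u' (Icc π (2*π)) := hy'c.sub (continuousOn_const.mul hψ'c)
  have hiu' : IntervalIntegrable u' volume π (2*π) := hy'i.sub (hψ'i.const_mul κ)
  have hexp : (fun t => ((q t:ℂ) - lam) * u t)
      = fun t => (((q t:ℂ) - lam) * y t) - κ * (((q t:ℂ) - lam) * ψ t) := by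
    funext t; simp only [hu]; ring
  have hiku : IntervalIntegrable (fun t => ((q t:ℂ) - lam) * u t) volume π (2*π) := by
    rw [hexp]; exact hkyi.sub (hkψi.const_mul κ)
  have he1 : ∀ x ∈ Icc π (2*π), u x = u π + ∫ t in π..x, u' t := by
    intro x hx
    have hsub : uIcc π x ⊆ uIcc π (2*π) := by
      rw [uIcc_of_le hx.1, uIcc_of_le hab]; exact Icc_subset_Icc_right hx.2
    have i1 : IntervalIntegrable y' volume π x := hy'i.mono_set hsub
    have i2 : IntervalIntegrable ψ' volume π x := hψ'i.mono_set hsub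
    simp only [hu, hu']
    rw [intervalIntegral.integral_sub i1 (i2.const_mul κ),
      intervalIntegral.integral_const_mul, hysol.1 x hx, hψsol.1 x hx]
    ring
  have he2 : ∀ x ∈ Icc π (2*π), u' x = u' π + ∫ t in π..x, ((q t:ℂ) - lam) * u t := by
    intro x hx
    have hsub : uIcc π x ⊆ uIcc π (2*π) := by
      rw [uIcc_of_le hx.1, uIcc_of_le hab]; exact Icc_subset_Icc_right hx.2
    have i1 : IntervalIntegrable (fun t => ((q t:ℂ) - lam) * y t) volume π x := hkyi.mono_set hsub
    have i2 : IntervalIntegrable (fun t => ((q t:ℂ) - lam) * ψ t) volume π x := hkψi.mono_set hsub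
    simp only [hu, hu']
    rw [hexp]
    rw [intervalIntegral.integral_sub i1 (i2.const_mul κ),
      intervalIntegral.integral_const_mul, hysol.2 x hx, hψsol.2 x hx]
    ring
  have hend : u (2*π) = 0 := by simp [hu, hψb, hκ]
  have hend' : u' (2*π) = 0 := by rw [hu']; simp only; rw [hybc, hψ'b]; ring
  have hzero := zero_of_anchor_right hab hcu hcu' hqi hiu' hiku he1 he2 hend hend'
  intro x hx
  obtain ⟨h1, h2⟩ := hzero x hx
  exact ⟨sub_eq_zero.1 h1, sub_eq_zero.1 h2⟩

/-- **Interpolation relations (23)**: evaluating the representations of `φ(π,·)`, `φ'(π,·)`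
at the zeros `μ_n`, `ν_n` of `ψ'(π,·)` and `ψ(π,·)`. Sequences are indexed so that
`n : ℕ` corresponds to the mathematical index `n + 1`. -/
theorem interpolation_relations (q : ℝ → ℝ) (h H : ℝ) (φ φ' ψ ψ' : ℂ → ℝ → ℂ)
    (μsq νsq μ ν : ℕ → ℝ) (K0 K : ℝ → ℝ) (ωm : ℝ)
    (hq : MemL2 q 0 (2 * π))
    (hφ : ∀ ρ : ℂ, IsSLSolution q (ρ ^ 2) 0 π (φ ρ) (φ' ρ) ∧
      φ ρ 0 = 1 ∧ φ' ρ 0 = (h : ℂ))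
    (hψ : ∀ ρ : ℂ, IsSLSolution q (ρ ^ 2) π (2 * π) (ψ ρ) (ψ' ρ) ∧
      ψ ρ (2 * π) = 1 ∧ ψ' ρ (2 * π) = -(H : ℂ))
    (hμsq : StrictMono μsq) (hμspec : ∀ lam : ℝ, IsEigenvalueDir q H lam ↔ ∃ n, μsq n = lam)
    (hνsq : StrictMono νsq) (hνspec : ∀ lam : ℝ, IsEigenvalueNeu q H lam ↔ ∃ n, νsq n = lam)
    (hμ : ∀ n, 0 ≤ μ n ∧ (μ n) ^ 2 = μsq n)
    (hν : ∀ n, 0 ≤ ν n ∧ (ν n) ^ 2 = νsq n)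
    (hμhalf : ∀ n, 1 / 2 ≤ μ n) (hνhalf : ∀ n, 1 / 2 ≤ ν n)
    (hωm : ωm = h + (1 / 2) * ∫ x in (0:ℝ)..π, q x)
    (hK0mem : MemL2 K0 0 π) (hKmem : MemL2 K 0 π)
    (hK0 : ∀ ρ : ℂ, ρ ≠ 0 →
      φ ρ π = Complex.cos (ρ * (π : ℂ)) + (ωm : ℂ) * Complex.sin (ρ * (π : ℂ)) / ρ +
        (1 / ρ) * ∫ t in (0:ℝ)..π, (K0 t : ℂ) * Complex.sin (ρ * (t : ℂ)))
    (hK : ∀ ρ : ℂ, ρ ≠ 0 →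
      φ' ρ π = -ρ * Complex.sin (ρ * (π : ℂ)) + (ωm : ℂ) * Complex.cos (ρ * (π : ℂ)) +
        ∫ t in (0:ℝ)..π, (K t : ℂ) * Complex.cos (ρ * (t : ℂ))) :
    ∀ n : ℕ,
      ψ' (μ n : ℂ) π ≠ 0 ∧ ψ (ν n : ℂ) π ≠ 0 ∧
      ((∫ t in (0:ℝ)..π, K0 t * Real.sin (μ n * t) : ℝ) : ℂ) =
        -(μ n : ℂ) * (Complex.cos ((μ n : ℂ) * (π : ℂ)) +
          (ωm : ℂ) * Complex.sin ((μ n : ℂ) * (π : ℂ)) / (μ n : ℂ) +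
          (φ' (μ n : ℂ) π * ψ (μ n : ℂ) π - φ (μ n : ℂ) π * ψ' (μ n : ℂ) π) /
            ψ' (μ n : ℂ) π) ∧
      ((∫ t in (0:ℝ)..π, K t * Real.cos (ν n * t) : ℝ) : ℂ) =
        (ν n : ℂ) * Complex.sin ((ν n : ℂ) * (π : ℂ)) -
          (ωm : ℂ) * Complex.cos ((ν n : ℂ) * (π : ℂ)) +
          (φ' (ν n : ℂ) π * ψ (ν n : ℂ) π - φ (ν n : ℂ) π * ψ' (ν n : ℂ) π) /
            ψ (ν n : ℂ) π := by
  intro n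
  have hπ := Real.pi_pos
  have hab : (π:ℝ) ≤ 2*π := by linarith
  have hqint : ∀ lam : ℂ, IntervalIntegrable (fun t => (q t:ℂ) - lam) volume π (2*π) := by
    intro lam
    haveI : Fact (volume (Ioo (0:ℝ) (2*π)) < ⊤) :=
      ⟨by rw [Real.volume_Ioo]; exact ENNReal.ofReal_lt_top⟩
    have hqi : Integrable q (volume.restrict (Ioo 0 (2*π))) := hq.integrable (by norm_num)
    have h1 : IntegrableOn (fun t => (q t:ℂ) - lam) (Ioo 0 (2*π)) volume := by
      refine Integrable.sub hqi.ofReal ?_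
      exact integrableOn_const (by rw [Real.volume_Ioo]; exact ENNReal.ofReal_ne_top)
    have h2 : IntegrableOn (fun t => (q t:ℂ) - lam) (Ioo π (2*π)) volume :=
      h1.mono_set (Ioo_subset_Ioo hπ.le le_rfl)
    rw [intervalIntegrable_iff_integrableOn_Ioc_of_le hab]
    exact h2.congr_set_ae Ioo_ae_eq_Ioc.symm
  -- μ part
  obtain ⟨hμ0, hμsq'⟩ := hμ n
  have hμhalf' := hμhalf n
  have hμne : μ n ≠ 0 := by linarith
  have hρμ : ((μ n : ℝ):ℂ) ≠ 0 := Complex.ofReal_ne_zero.2 hμne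
  obtain ⟨Y, Y', hYsol, hYnt, hYπ, hYbc⟩ := (hμspec (μsq n)).2 ⟨n, rfl⟩
  obtain ⟨hψsolμ, hψbμ, hψ'bμ⟩ := hψ ((μ n : ℝ):ℂ)
  have hlamμ : (((μ n : ℝ):ℂ))^2 = ((μsq n : ℝ) : ℂ) := by
    rw [← hμsq']; push_cast; ring
  rw [hlamμ] at hψsolμ
  obtain ⟨hY2, hYprop, hYnb⟩ := key_prop (hqint _) hψsolμ hψbμ hψ'bμ hYsol hYnt hYbc
  have hψπμ : ψ ((μ n : ℝ):ℂ) π = 0 := by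
    have h := (hYprop π ⟨le_rfl, hab⟩).1
    rw [hYπ] at h
    exact (mul_eq_zero.1 h.symm).resolve_left hY2
  have hψ'πμ : ψ' ((μ n : ℝ):ℂ) π ≠ 0 := fun h => hYnb ⟨hψπμ, h⟩
  -- ν part
  obtain ⟨hν0, hνsq'⟩ := hν n
  have hνhalf' := hνhalf n
  have hνne : ν n ≠ 0 := by linarith
  have hρν : ((ν n : ℝ):ℂ) ≠ 0 := Complex.ofReal_ne_zero.2 hνne
  obtain ⟨Z, Z', hZsol, hZnt, hZπ, hZbc⟩ := (hνspec (νsq n)).2 ⟨n, rfl⟩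
  obtain ⟨hψsolν, hψbν, hψ'bν⟩ := hψ ((ν n : ℝ):ℂ)
  have hlamν : (((ν n : ℝ):ℂ))^2 = ((νsq n : ℝ) : ℂ) := by
    rw [← hνsq']; push_cast; ring
  rw [hlamν] at hψsolν
  obtain ⟨hZ2, hZprop, hZnb⟩ := key_prop (hqint _) hψsolν hψbν hψ'bν hZsol hZnt hZbc
  have hψ'πν : ψ' ((ν n : ℝ):ℂ) π = 0 := by
    have h := (hZprop π ⟨le_rfl, hab⟩).2
    rw [hZπ] at h
    exact (mul_eq_zero.1 h.symm).resolve_left hZ2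
  have hψπν : ψ ((ν n : ℝ):ℂ) π ≠ 0 := fun h => hZnb ⟨h, hψ'πν⟩
  refine ⟨hψ'πμ, hψπν, ?_, ?_⟩
  · have hrep := hK0 ((μ n : ℝ):ℂ) hρμ
    have hcast : ((∫ t in (0:ℝ)..π, K0 t * Real.sin (μ n * t) : ℝ) : ℂ)
        = ∫ t in (0:ℝ)..π, (K0 t : ℂ) * Complex.sin (((μ n:ℝ):ℂ) * (t:ℂ)) := by
      rw [← intervalIntegral.integral_ofReal]
      refine intervalIntegral.integral_congr (fun t ht => ?_)
      push_cast
      ring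
    rw [hcast, hψπμ, hrep]
    field_simp
    ring
  · have hrep := hK ((ν n : ℝ):ℂ) hρν
    have hcast : ((∫ t in (0:ℝ)..π, K t * Real.cos (ν n * t) : ℝ) : ℂ)
        = ∫ t in (0:ℝ)..π, (K t : ℂ) * Complex.cos (((ν n:ℝ):ℂ) * (t:ℂ)) := by
      rw [← intervalIntegral.integral_ofReal]
      refine intervalIntegral.integral_congr (fun t ht => ?_)
      push_cast
      ring
    rw [hcast, hψ'πν, hrep]
    field_simp
    ring


end
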